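/- Let (R, μ) be a σ-finite nonatomic measure space and let g ≥ 0 be a μ-measurable function on R. Then ∫_R g dμ ≥ ∫_0^{μ(R)} g_*(t) dt. -/

import Mathlib

open MeasureTheory Set Filter Topology ENNReal

variable {α : Type*} [MeasurableSpace α]

/-- A measure is *nonatomic* if every set of positive measure contains a measurable subset
of strictly smaller, positive measure. -/
def Nonatomic (μ : Measure α) : Prop :=
  ∀ E : Set α, MeasurableSet E → 0 < μ E → ∃ F, F ⊆ E ∧ MeasurableSet F ∧ 0 < μ F ∧ μ F < μ E

/-- The lower distribution function `κ_f(s) = μ {x : |f x| < s}`. -/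
noncomputable def lowerDistrib (μ : Measure α) (f : α → ℝ) (s : ℝ) : ℝ≥0∞ :=
  μ {x | |f x| < s}

/-- The nondecreasing rearrangement `f_*(t) = sup {s > 0 : κ_f(s) < t}` (with `sup ∅ = 0`). -/
noncomputable def ndRearr (μ : Measure α) (f : α → ℝ) (t : ℝ) : ℝ≥0∞ :=
  sSup {y : ℝ≥0∞ | ∃ s : ℝ, 0 < s ∧ lowerDistrib μ f s < ENNReal.ofReal t ∧ y = ENNReal.ofReal s}

/-- The distribution function `μ_f(s) = μ {x : |f x| > s}`. -/
noncomputable def distrib (μ : Measure α) (f : α → ℝ) (s : ℝ) : ℝ≥0∞ :=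
  μ {x | s < |f x|}

/-- The nonincreasing rearrangement `f^*(t) = inf {s > 0 : μ_f(s) ≤ t}` (with `inf ∅ = ∞`). -/
noncomputable def niRearr (μ : Measure α) (f : α → ℝ) (t : ℝ) : ℝ≥0∞ :=
  sInf {y : ℝ≥0∞ | ∃ s : ℝ, 0 < s ∧ distrib μ f s ≤ ENNReal.ofReal t ∧ y = ENNReal.ofReal s}

lemma lowerDistrib_mono (μ : Measure α) (g : α → ℝ) : Monotone (lowerDistrib μ g) :=
  fun s₁ s₂ h => measure_mono (fun x hx => lt_of_lt_of_le hx h)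

lemma ndRearr_mono (μ : Measure α) (g : α → ℝ) : Monotone (ndRearr μ g) := by
  intro t₁ t₂ h
  apply sSup_le_sSup
  rintro y ⟨s, hs, hκ, rfl⟩
  exact ⟨s, hs, hκ.trans_le (ENNReal.ofReal_le_ofReal h), rfl⟩

lemma ndRearr_ne_top (μ : Measure α) (g : α → ℝ) {t : ℝ}
    (ht : ENNReal.ofReal t < μ univ) : ndRearr μ g t ≠ ∞ := by
  have hsup : μ univ = ⨆ n : ℕ, lowerDistrib μ g n := by
    have hU : (⋃ n : ℕ, {x | |g x| < (n : ℝ)}) = univ := by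
      ext x
      simp only [mem_iUnion, mem_setOf_eq, mem_univ, iff_true]
      obtain ⟨n, hn⟩ := exists_nat_gt |g x|
      exact ⟨n, hn⟩
    rw [← hU]
    have hmono : Monotone fun n : ℕ => {x : α | |g x| < (n : ℝ)} :=
      fun n m hnm x hx => show |g x| < (m : ℝ) from lt_of_lt_of_le hx (Nat.cast_le.mpr hnm)
    exact hmono.directed_le.measure_iUnion
  rw [hsup] at ht
  obtain ⟨n, hn⟩ := lt_iSup_iff.mp ht
  have hle : ndRearr μ g t ≤ ENNReal.ofReal n := by
    apply sSup_le
    rintro y ⟨s, hs, hκ, rfl⟩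
    apply ENNReal.ofReal_le_ofReal
    by_contra hsn
    push_neg at hsn
    exact absurd (lowerDistrib_mono μ g hsn.le) (not_le.mpr (hκ.trans hn))
  exact ne_top_of_le_ne_top ENNReal.ofReal_ne_top hle

lemma vol_bound (a b : ℝ≥0∞) :
    volume {t : ℝ | a < ENNReal.ofReal t ∧ ENNReal.ofReal t < b} ≤ b - a := by
  rcases eq_or_ne a ∞ with rfl | ha
  · have : {t : ℝ | ∞ < ENNReal.ofReal t ∧ ENNReal.ofReal t < b} = ∅ := by
      ext t; simp
    simp [this]
  rcases eq_or_ne b ∞ with rfl | hb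
  · rw [ENNReal.top_sub ha]; exact le_top
  calc volume {t : ℝ | a < ENNReal.ofReal t ∧ ENNReal.ofReal t < b}
      ≤ volume (Ioo a.toReal b.toReal) := by
        apply measure_mono
        rintro t ⟨h1, h2⟩
        have ht : 0 < t := ENNReal.ofReal_pos.mp (pos_of_gt h1)
        exact ⟨(ENNReal.lt_ofReal_iff_toReal_lt ha).mp h1,
          (ENNReal.ofReal_lt_iff_lt_toReal ht.le hb).mp h2⟩
    _ = ENNReal.ofReal (b.toReal - a.toReal) := Real.volume_Ioo
    _ = ENNReal.ofReal b.toReal - ENNReal.ofReal a.toReal :=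
        ENNReal.ofReal_sub _ ENNReal.toReal_nonneg
    _ = b - a := by rw [ENNReal.ofReal_toReal ha, ENNReal.ofReal_toReal hb]

lemma key_bound (μ : Measure α) (g : α → ℝ) {s : ℝ} (hs : 0 < s)
    (hT : MeasurableSet {t : ℝ | 0 < t ∧ ENNReal.ofReal t < μ univ}) :
    (volume.restrict {t : ℝ | 0 < t ∧ ENNReal.ofReal t < μ univ})
      {t : ℝ | s < (ndRearr μ g t).toReal} ≤ distrib μ g s := by
  set T := {t : ℝ | 0 < t ∧ ENNReal.ofReal t < μ univ} with hTdef
  set κinf := ⨅ (s' : ℝ) (_ : s < s'), lowerDistrib μ g s' with hκdef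
  have hbound : μ univ - κinf ≤ distrib μ g s := by
    rw [tsub_le_iff_right]
    refine tsub_le_iff_left.mp (le_iInf₂ fun s' hs' => tsub_le_iff_left.mpr ?_)
    calc μ univ ≤ μ ({x | s < |g x|} ∪ {x | |g x| < s'}) := by
          apply measure_mono
          intro x _
          rcases lt_or_ge (|g x|) s' with h | h
          · exact Or.inr h
          · exact Or.inl (lt_of_lt_of_le hs' h)
      _ ≤ distrib μ g s + lowerDistrib μ g s' := measure_union_le _ _
  rw [Measure.restrict_apply' hT]
  refine le_trans (le_trans (measure_mono ?_) (vol_bound κinf (μ univ))) hbound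
  rintro t ⟨hst, h0t, htμ⟩
  refine ⟨?_, htμ⟩
  have hlt : ENNReal.ofReal s < ndRearr μ g t := by
    rcases eq_or_ne (ndRearr μ g t) ∞ with h | h
    · rw [h]; exact ENNReal.ofReal_lt_top
    · exact (ENNReal.ofReal_lt_iff_lt_toReal hs.le h).mpr hst
  obtain ⟨y, ⟨s', hs'pos, hκ, rfl⟩, hy⟩ := lt_sSup_iff.mp hlt
  have hss' : s < s' := by
    by_contra hle
    push_neg at hle
    exact absurd (ENNReal.ofReal_le_ofReal hle) (not_le.mpr hy)
  exact lt_of_le_of_lt (iInf₂_le s' hss') hκ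

/-- For `g ≥ 0`, one has `∫_R g dμ ≥ ∫_0^{μ(R)} g_*(t) dt`. -/
theorem lintegral_ndRearr_le
    (μ : Measure α) [SigmaFinite μ] (hμ : Nonatomic μ)
    (g : α → ℝ) (hg : Measurable g) (hg0 : 0 ≤ g) :
    ∫⁻ t in {t : ℝ | 0 < t ∧ ENNReal.ofReal t < μ univ}, ndRearr μ g t ≤
      ∫⁻ x, ENNReal.ofReal (g x) ∂μ := by
  set T := {t : ℝ | 0 < t ∧ ENNReal.ofReal t < μ univ} with hTdef
  have hT : MeasurableSet T := by
    have : T = Ioi 0 ∩ (ENNReal.ofReal ⁻¹' Iio (μ univ)) := rfl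
    rw [this]
    exact measurableSet_Ioi.inter (ENNReal.measurable_ofReal measurableSet_Iio)
  have hmble : Measurable fun t => (ndRearr μ g t).toReal :=
    ENNReal.measurable_toReal.comp (ndRearr_mono μ g).measurable
  calc ∫⁻ t in T, ndRearr μ g t
      = ∫⁻ t in T, ENNReal.ofReal ((ndRearr μ g t).toReal) := by
        apply setLIntegral_congr_fun hT
        exact fun t ht => (ENNReal.ofReal_toReal (ndRearr_ne_top μ g ht.2)).symm
    _ = ∫⁻ s in Ioi 0, (volume.restrict T) {t | s < (ndRearr μ g t).toReal} :=
        lintegral_eq_lintegral_meas_lt _ (ae_of_all _ fun t => ENNReal.toReal_nonneg)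
          hmble.aemeasurable
    _ ≤ ∫⁻ s in Ioi 0, distrib μ g s := by
        apply lintegral_mono_ae
        filter_upwards [ae_restrict_mem measurableSet_Ioi] with s hs
        exact key_bound μ g hs hT
    _ = ∫⁻ s in Ioi 0, μ {x | s < g x} := by
        apply lintegral_congr fun s => ?_
        unfold distrib
        congr 1
        ext x
        simp only [mem_setOf_eq, abs_of_nonneg (hg0 x)]
    _ = ∫⁻ x, ENNReal.ofReal (g x) ∂μ :=
        (lintegral_eq_lintegral_meas_lt μ (ae_of_all _ hg0) hg.aemeasurable).symm
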